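/- If {φ_i}_{i=1}^M is a unit norm frame for ℂ^N whose induced outer products are linearly independent, then the smallest eigenvalue of the Gram matrix G = [|⟨φ_i,φ_j⟩|²] is at most M(N−1)/(N(M−1)). -/

import Mathlib

open scoped BigOperators
open Matrix

/-- The induced outer product `φφ*` of a vector `φ ∈ ℂ^N`. -/
noncomputable def outerProd {N : ℕ} (φ : Fin N → ℂ) : Matrix (Fin N) (Fin N) ℂ :=
  Matrix.of fun i j => φ i * star (φ j)

/-- The Frobenius inner product `⟨S,T⟩_F = Tr(T* S)`. -/
noncomputable def frob {N : ℕ} (S T : Matrix (Fin N) (Fin N) ℂ) : ℂ :=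
  Matrix.trace (T.conjTranspose * S)

/-- The standard inner product on `ℂ^N`. -/
noncomputable def cip {N : ℕ} (φ ψ : Fin N → ℂ) : ℂ :=
  ∑ i, φ i * star (ψ i)

theorem stmt_9 {N M : ℕ} [NeZero N] [NeZero M] (hM : 1 < M) (φ : Fin M → Fin N → ℂ)
    (hunit : ∀ i, cip (φ i) (φ i) = 1)
    (hframe : Submodule.span ℂ (Set.range φ) = ⊤)
    (hind : LinearIndependent ℝ fun i => outerProd (φ i))
    (G : Matrix (Fin M) (Fin M) ℝ)
    (hGdef : ∀ i j, G i j = ‖cip (φ i) (φ j)‖ ^ 2)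
    (hG : G.IsHermitian) :
    Finset.univ.inf' Finset.univ_nonempty hG.eigenvalues ≤
      (M : ℝ) * ((N : ℝ) - 1) / ((N : ℝ) * ((M : ℝ) - 1)) := by
  classical
  have hN1 : (1:ℝ) ≤ (N:ℝ) := by exact_mod_cast Nat.one_le_iff_ne_zero.mpr (NeZero.ne N)
  have hNpos : (0:ℝ) < N := by linarith
  have hM2 : (2:ℝ) ≤ (M:ℝ) := by exact_mod_cast hM
  -- trace of G is M
  have htrace : ∑ k, hG.eigenvalues k = (M : ℝ) := by
    have h1 : G.trace = ∑ k, hG.eigenvalues k := by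
      conv_lhs => rw [hG.spectral_theorem, Unitary.conjStarAlgAut_apply]
      rw [Matrix.trace_mul_cycle,
        (Matrix.mem_unitaryGroup_iff').mp (hG.eigenvectorUnitary).2, Matrix.one_mul,
        Matrix.trace_diagonal]
      simp [RCLike.ofReal_real_eq_id]
    have h2 : G.trace = (M : ℝ) := by
      have : ∀ i : Fin M, G i i = 1 := by
        intro i; simp [hGdef i i, hunit i]
      simp [Matrix.trace, Matrix.diag, this]
    rw [← h1, h2]
  -- quadratic form with all-ones vector
  set u : Fin M → ℝ := fun _ => 1 with hu
  set U : Matrix (Fin M) (Fin M) ℝ := (hG.eigenvectorUnitary : Matrix (Fin M) (Fin M) ℝ) with hU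
  set w : Fin M → ℝ := star U *ᵥ u with hw
  have hsw : star U *ᵥ u = u ᵥ* U := by
    rw [Matrix.star_eq_conjTranspose, Matrix.conjTranspose_eq_transpose_of_trivial,
      Matrix.mulVec_transpose]
  have hUstar : U * star U = 1 := (Matrix.mem_unitaryGroup_iff).mp (hG.eigenvectorUnitary).2
  have hwsum : ∑ k, (w k)^2 = (M : ℝ) := by
    have h1 : ∑ k, (w k)^2 = w ⬝ᵥ w := by simp [dotProduct, sq]
    have h2 : w ⬝ᵥ w = w ᵥ* star U ⬝ᵥ u := by
      conv_lhs => rw [hw, Matrix.dotProduct_mulVec]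
    have h3 : w ᵥ* star U = u ᵥ* (U * star U) := by
      rw [hw, hsw, Matrix.vecMul_vecMul]
    rw [h1, h2, h3, hUstar, Matrix.vecMul_one]
    simp [hu, dotProduct]
  have hqform : u ⬝ᵥ G *ᵥ u = ∑ k, hG.eigenvalues k * (w k)^2 := by
    conv_lhs => rw [hG.spectral_theorem, Unitary.conjStarAlgAut_apply, ← hU]
    rw [Matrix.dotProduct_mulVec, ← Matrix.vecMul_vecMul, ← Matrix.vecMul_vecMul, ← hsw, ← hw,
      ← Matrix.dotProduct_mulVec, ← hw]
    simp only [Matrix.vecMul_diagonal, dotProduct]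
    apply Finset.sum_congr rfl
    intro k _
    simp [RCLike.ofReal_real_eq_id]
    ring
  -- the quadratic form is the full sum of entries of G
  set q : ℝ := ∑ i, ∑ j, G i j with hq
  have hqu : u ⬝ᵥ G *ᵥ u = q := by
    simp [hu, hq, dotProduct, Matrix.mulVec]
  -- lower bound q ≥ M^2/N, via the frame operator
  set A : Matrix (Fin M) (Fin N) ℂ := Matrix.of (fun k i => φ k i) with hA
  set P : Matrix (Fin N) (Fin N) ℂ := Aᴴ * A with hP
  set Q : Matrix (Fin M) (Fin M) ℂ := A * Aᴴ with hQ
  have hPH : Pᴴ = P := by rw [hP, conjTranspose_mul, conjTranspose_conjTranspose]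
  have hQH : Qᴴ = Q := by rw [hQ, conjTranspose_mul, conjTranspose_conjTranspose]
  have htr : Matrix.trace (P * P) = Matrix.trace (Q * Q) := by
    rw [hP, hQ]
    rw [show Aᴴ * A * (Aᴴ * A) = Aᴴ * (A * Aᴴ * A) by simp only [Matrix.mul_assoc]]
    rw [Matrix.trace_mul_comm]
    simp only [Matrix.mul_assoc]
  have hexp : ∀ {n : ℕ} (R : Matrix (Fin n) (Fin n) ℂ), Rᴴ = R →
      Matrix.trace (R * R) = ((∑ i, ∑ j, Complex.normSq (R i j) : ℝ) : ℂ) := by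
    intro n R hR
    rw [Matrix.trace]
    push_cast
    apply Finset.sum_congr rfl
    intro i _
    rw [Matrix.diag, Matrix.mul_apply]
    apply Finset.sum_congr rfl
    intro j _
    have : R j i = star (R i j) := by
      conv_lhs => rw [← hR]
      simp [Matrix.conjTranspose_apply]
    rw [this, RCLike.star_def, Complex.mul_conj]
  have hQc : ∀ k l, Q k l = cip (φ k) (φ l) := by
    intro k l
    simp [hQ, Matrix.mul_apply, Matrix.conjTranspose_apply, cip, hA, RCLike.star_def]
  have hmain : ∑ i, ∑ j, Complex.normSq (P i j) = q := by
    have h1 := htr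
    rw [hexp P hPH, hexp Q hQH] at h1
    have h2 : ∑ i, ∑ j, Complex.normSq (P i j) = ∑ k, ∑ l, Complex.normSq (Q k l) := by
      exact_mod_cast h1
    rw [h2, hq]
    apply Finset.sum_congr rfl; intro k _
    apply Finset.sum_congr rfl; intro l _
    rw [hQc, hGdef k l, Complex.sq_norm]
  have hPdiag : ∑ i, (P i i).re = (M : ℝ) := by
    have h1 : ∑ i, P i i = (M : ℂ) := by
      have hPQ : Matrix.trace P = Matrix.trace Q := Matrix.trace_mul_comm _ _
      rw [Matrix.trace, Matrix.trace] at hPQ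
      simp only [Matrix.diag] at hPQ
      rw [hPQ]
      have h2 : ∀ k : Fin M, Q k k = 1 := fun k => by rw [hQc k k, hunit k]
      simp [h2]
    have := congrArg Complex.re h1
    simpa [Complex.re_sum] using this
  have hqlb : (M:ℝ)^2 ≤ (N:ℝ) * q := by
    have hcs : (∑ i, (P i i).re)^2 ≤ ((Finset.univ : Finset (Fin N)).card : ℝ)
        * ∑ i, ((P i i).re)^2 := sq_sum_le_card_mul_sum_sq
    rw [hPdiag, Finset.card_univ, Fintype.card_fin] at hcs
    have h2 : ∑ i, ((P i i).re)^2 ≤ ∑ i, Complex.normSq (P i i) := by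
      apply Finset.sum_le_sum
      intro i _
      rw [Complex.normSq_apply]
      nlinarith [sq_nonneg (P i i).im]
    have h3 : ∑ i, Complex.normSq (P i i) ≤ ∑ i, ∑ j, Complex.normSq (P i j) := by
      apply Finset.sum_le_sum
      intro i _
      exact Finset.single_le_sum (fun j _ => Complex.normSq_nonneg _) (Finset.mem_univ i)
    rw [hmain] at h3
    calc (M:ℝ)^2 ≤ (N:ℝ) * ∑ i, ((P i i).re)^2 := hcs
      _ ≤ (N:ℝ) * q := mul_le_mul_of_nonneg_left (le_trans h2 h3) (le_of_lt hNpos)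
  -- there is an eigenvalue ≥ M/N
  obtain ⟨k0, -, hk0⟩ := Finset.exists_max_image (Finset.univ : Finset (Fin M))
    hG.eigenvalues Finset.univ_nonempty
  have hk0big : (M:ℝ) / N ≤ hG.eigenvalues k0 := by
    have h1 : q ≤ hG.eigenvalues k0 * (M:ℝ) := by
      rw [← hqu, hqform, ← hwsum, Finset.mul_sum]
      apply Finset.sum_le_sum
      intro k _
      exact mul_le_mul_of_nonneg_right (hk0 k (Finset.mem_univ k)) (sq_nonneg _)
    rw [div_le_iff₀ hNpos]
    nlinarith
  -- sum of the other eigenvalues bounds the min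
  set m := Finset.univ.inf' Finset.univ_nonempty hG.eigenvalues with hm
  have hmle : ∀ k, m ≤ hG.eigenvalues k := fun k =>
    Finset.inf'_le _ (Finset.mem_univ k)
  have hsum : ((M:ℝ) - 1) * m ≤ (M:ℝ) - hG.eigenvalues k0 := by
    have h1 : ∑ k ∈ Finset.univ.erase k0, m ≤ ∑ k ∈ Finset.univ.erase k0, hG.eigenvalues k :=
      Finset.sum_le_sum (fun k _ => hmle k)
    have h2 : ∑ k ∈ Finset.univ.erase k0, hG.eigenvalues k = (M:ℝ) - hG.eigenvalues k0 := by
      rw [← htrace, ← Finset.add_sum_erase _ _ (Finset.mem_univ k0)]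
      ring
    have h3 : ∑ k ∈ Finset.univ.erase k0, m = ((M:ℝ) - 1) * m := by
      rw [Finset.sum_const, Finset.card_erase_of_mem (Finset.mem_univ k0),
        Finset.card_univ, Fintype.card_fin]
      have hc : ((M - 1 : ℕ) : ℝ) = (M:ℝ) - 1 := by
        have : 1 ≤ M := le_of_lt hM
        push_cast [this]
        ring
      rw [nsmul_eq_mul, hc]
    rw [h3, h2] at h1
    exact h1
  rw [le_div_iff₀ (by nlinarith)]
  rw [div_le_iff₀ hNpos] at hk0big
  nlinarith
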